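/- arXiv:1607.03390 — 7 statements merged into one kernel-verified Lean document; each statement's English description precedes it below -/
import Mathlib

section
/- Let X ∈ ℝ^{n×p} have full column rank p < n, let H be a symmetric positive definite n×n matrix, and let L₂ ∈ ℝ^{n×(n−p)} satisfy L₂ᵀX = 0 with rank(L₂) = n − p. Define P = H⁻¹ − H⁻¹X(XᵀH⁻¹X)⁻¹XᵀH⁻¹. Then P = L₂(L₂ᵀHL₂)⁻¹L₂ᵀ. -/
open Matrix

lemma mulVec_inj_of_rank {a b : ℕ} (A : Matrix (Fin a) (Fin b) ℝ) (hA : A.rank = b) :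
    Function.Injective A.mulVec := by
  have h := A.mulVecLin.finrank_range_add_finrank_ker
  rw [Module.finrank_fin_fun, ← Matrix.rank, hA] at h
  have hker : LinearMap.ker A.mulVecLin = ⊥ := by
    rw [← Submodule.finrank_eq_zero (R := ℝ)]
    omega
  intro x y hxy
  have : A.mulVecLin x = A.mulVecLin y := hxy
  exact LinearMap.ker_eq_bot.mp hker this

lemma posdef_conj {n k : ℕ} {H : Matrix (Fin n) (Fin n) ℝ} (hH : H.PosDef)
    (L : Matrix (Fin n) (Fin k) ℝ) (hL : Function.Injective L.mulVec) :
    (Lᵀ * H * L).PosDef := by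
  rw [posDef_iff_dotProduct_mulVec]
  constructor
  · have h := isHermitian_conjTranspose_mul_mul L hH.isHermitian
    simpa [conjTranspose_eq_transpose_of_trivial] using h
  · intro x hx
    have hLx : L *ᵥ x ≠ 0 := by
      intro h
      exact hx (hL (by simp [h]))
    have h2 := (posDef_iff_dotProduct_mulVec.mp hH).2 hLx
    simp only [star_trivial, dotProduct_mulVec, Matrix.mul_assoc] at h2 ⊢
    rwa [← vecMul_vecMul, vecMul_transpose, ← vecMul_vecMul]

theorem stmt_2 (n p : ℕ) (hpn : p < n) (X : Matrix (Fin n) (Fin p) ℝ)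
    (hX : X.rank = p) (H : Matrix (Fin n) (Fin n) ℝ) (hH : H.PosDef)
    (L₂ : Matrix (Fin n) (Fin (n - p)) ℝ) (hL₂X : L₂ᵀ * X = 0)
    (hL₂ : L₂.rank = n - p) :
    H⁻¹ - H⁻¹ * X * (Xᵀ * H⁻¹ * X)⁻¹ * Xᵀ * H⁻¹ = L₂ * (L₂ᵀ * H * L₂)⁻¹ * L₂ᵀ := by
  classical
  have hXinj : Function.Injective X.mulVec := mulVec_inj_of_rank X hX
  have hLinj : Function.Injective L₂.mulVec := mulVec_inj_of_rank L₂ hL₂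
  have hA : (Xᵀ * H⁻¹ * X).PosDef := posdef_conj hH.inv X hXinj
  have hB : (L₂ᵀ * H * L₂).PosDef := posdef_conj hH L₂ hLinj
  have hdetH : IsUnit H.det := (Matrix.isUnit_iff_isUnit_det H).mp hH.isUnit
  have hdetA : IsUnit (Xᵀ * (H⁻¹ * X)).det := by
    rw [← Matrix.mul_assoc]
    exact (Matrix.isUnit_iff_isUnit_det _).mp hA.isUnit
  have hdetB : IsUnit (L₂ᵀ * (H * L₂)).det := by
    rw [← Matrix.mul_assoc]
    exact (Matrix.isUnit_iff_isUnit_det _).mp hB.isUnit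
  have hXL : Xᵀ * L₂ = 0 := by
    have := congrArg Matrix.transpose hL₂X
    simpa using this
  set P : Matrix (Fin n) (Fin n) ℝ := H⁻¹ - H⁻¹ * X * (Xᵀ * H⁻¹ * X)⁻¹ * Xᵀ * H⁻¹ with hP
  set Q : Matrix (Fin n) (Fin n) ℝ := L₂ * (L₂ᵀ * H * L₂)⁻¹ * L₂ᵀ with hQ
  have hPX : P * X = 0 := by
    rw [hP, Matrix.sub_mul]
    simp only [Matrix.mul_assoc]
    rw [Matrix.nonsing_inv_mul _ hdetA, Matrix.mul_one, sub_self]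
  have hPHL : P * (H * L₂) = L₂ := by
    rw [hP, Matrix.sub_mul]
    simp only [Matrix.mul_assoc]
    rw [Matrix.nonsing_inv_mul_cancel_left _ _ hdetH, hXL]
    simp
  have hQX : Q * X = 0 := by
    rw [hQ]
    simp only [Matrix.mul_assoc, hL₂X]
    simp
  have hQHL : Q * (H * L₂) = L₂ := by
    rw [hQ]
    simp only [Matrix.mul_assoc]
    rw [Matrix.nonsing_inv_mul _ hdetB, Matrix.mul_one]
  -- the square matrix with columns X and H*L₂
  have e : Fin n ≃ Fin p ⊕ Fin (n - p) :=
    (finCongr (Nat.add_sub_cancel' hpn.le).symm).trans finSumFinEquiv.symm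
  set W0 : Matrix (Fin n) (Fin p ⊕ Fin (n - p)) ℝ := fromCols X (H * L₂) with hW0
  set W : Matrix (Fin n) (Fin n) ℝ := W0.submatrix id e with hW
  have hker : ∀ v : Fin n → ℝ, W *ᵥ v = 0 → v = 0 := by
    intro v hv
    rw [hW, submatrix_mulVec_equiv] at hv
    set u : Fin p ⊕ Fin (n - p) → ℝ := v ∘ e.symm with hu
    have hu0 : W0 *ᵥ u = 0 := funext fun i => congrFun hv i
    have husum : u = Sum.elim (u ∘ Sum.inl) (u ∘ Sum.inr) := by
      funext x; cases x <;> rfl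
    rw [hW0, husum, fromCols_mulVec_sumElim] at hu0
    have hb : (u ∘ Sum.inr) = 0 := by
      have h1 := congrArg (fun w => L₂ᵀ *ᵥ w) hu0
      simp only [mulVec_add, mulVec_mulVec, mulVec_zero] at h1
      rw [hL₂X, ← Matrix.mul_assoc] at h1
      simp only [zero_mulVec, zero_add] at h1
      have hBinj : Function.Injective (L₂ᵀ * H * L₂).mulVec :=
        Matrix.mulVec_injective_iff_isUnit.mpr hB.isUnit
      have := hBinj (a₁ := u ∘ Sum.inr) (a₂ := 0) (by simpa using h1)
      exact this
    have ha : (u ∘ Sum.inl) = 0 := by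
      rw [hb] at hu0
      simp only [mulVec_zero, add_zero] at hu0
      exact hXinj (a₂ := 0) (by simpa using hu0)
    have hu0' : u = 0 := by
      rw [husum, ha, hb]; funext x; cases x <;> rfl
    funext i
    have : v i = u (e i) := by simp [hu]
    rw [this, hu0']; rfl
  have hWinj : Function.Injective W.mulVec := by
    intro v w hvw
    have : W *ᵥ (v - w) = 0 := by
      rw [mulVec_sub, hvw, sub_self]
    have := hker _ this
    exact sub_eq_zero.mp this
  have hdetW : IsUnit W.det :=
    (Matrix.isUnit_iff_isUnit_det W).mp (Matrix.mulVec_injective_iff_isUnit.mp hWinj)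
  have hPW : P * W = Q * W := by
    have h1 : P * W0 = Q * W0 := by
      rw [hW0, mul_fromCols, mul_fromCols, hPX, hPHL, hQX, hQHL]
    rw [hW]
    have h2 : P * W0.submatrix id ⇑e = (P * W0).submatrix id ⇑e := by
      ext i j; simp [Matrix.mul_apply, Matrix.submatrix]
    have h3 : Q * W0.submatrix id ⇑e = (Q * W0).submatrix id ⇑e := by
      ext i j; simp [Matrix.mul_apply, Matrix.submatrix]
    rw [h2, h3, h1]
  calc P = P * W * W⁻¹ := by rw [Matrix.mul_assoc, Matrix.mul_nonsing_inv _ hdetW, Matrix.mul_one]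
    _ = Q * W * W⁻¹ := by rw [hPW]
    _ = Q := by rw [Matrix.mul_assoc, Matrix.mul_nonsing_inv _ hdetW, Matrix.mul_one]
end

section
/- Let X ∈ ℝ^{n×p} have full column rank p < n, H be symmetric positive definite, and L = [L₁, L₂] satisfy L₁ᵀX = I_p and L₂ᵀX = 0 with L nonsingular. Then (XᵀH⁻¹X)⁻¹ = L₁ᵀHL₁ − L₁ᵀHL₂(L₂ᵀHL₂)⁻¹L₂ᵀHL₁. -/
open Matrix

lemma posDef_conj_aux {a b : ℕ} {H : Matrix (Fin a) (Fin a) ℝ} (hH : H.PosDef)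
    (B : Matrix (Fin a) (Fin b) ℝ) (hB : ∀ v, B *ᵥ v = 0 → v = 0) :
    (Bᵀ * H * B).PosDef := by
  rw [posDef_iff_dotProduct_mulVec]
  constructor
  · have h := hH.isHermitian
    unfold Matrix.IsHermitian at *
    rw [conjTranspose_eq_transpose_of_trivial] at *
    rw [Matrix.transpose_mul, Matrix.transpose_mul, Matrix.transpose_transpose, h,
      Matrix.mul_assoc]
  · intro x hx
    have hBx : B *ᵥ x ≠ 0 := fun h => hx (hB x h)
    have h := (posDef_iff_dotProduct_mulVec.mp hH).2 hBx
    have heq : star x ⬝ᵥ (Bᵀ * H * B) *ᵥ x = star (B *ᵥ x) ⬝ᵥ H *ᵥ (B *ᵥ x) := by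
      rw [← Matrix.mulVec_mulVec, ← Matrix.mulVec_mulVec, Matrix.dotProduct_mulVec,
        Matrix.vecMul_transpose]
      simp [star_trivial]
    rw [heq]
    exact h

theorem stmt_3 (n p : ℕ) (hpn : p < n) (X : Matrix (Fin n) (Fin p) ℝ)
    (hX : X.rank = p) (H : Matrix (Fin n) (Fin n) ℝ) (hH : H.PosDef)
    (L₁ : Matrix (Fin n) (Fin p) ℝ) (L₂ : Matrix (Fin n) (Fin (n - p)) ℝ)
    (M : Matrix (Fin p ⊕ Fin (n - p)) (Fin n) ℝ)
    (hLM : Matrix.fromCols L₁ L₂ * M = 1) (hML : M * Matrix.fromCols L₁ L₂ = 1)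
    (hL₁X : L₁ᵀ * X = 1) (hL₂X : L₂ᵀ * X = 0) :
    (Xᵀ * H⁻¹ * X)⁻¹ =
      L₁ᵀ * H * L₁ - L₁ᵀ * H * L₂ * (L₂ᵀ * H * L₂)⁻¹ * L₂ᵀ * H * L₁ := by
  set M₁ := M.toRows₁ with hM₁def
  set M₂ := M.toRows₂ with hM₂def
  -- block equations
  have h2 : M₂ * L₂ = 1 := by
    ext i j
    have := congrFun (congrFun hML (Sum.inr i)) (Sum.inr j)
    simpa [Matrix.mul_apply, Matrix.fromCols, Matrix.one_apply, Matrix.toRows₂, hM₂def]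
      using this
  have h3 : L₁ * M₁ + L₂ * M₂ = 1 := by
    calc L₁ * M₁ + L₂ * M₂ = Matrix.fromCols L₁ L₂ * Matrix.fromRows M₁ M₂ :=
          (fromCols_mul_fromRows L₁ L₂ M₁ M₂).symm
      _ = Matrix.fromCols L₁ L₂ * M := by rw [hM₁def, hM₂def, fromRows_toRows]
      _ = 1 := hLM
  have hXL₁ : Xᵀ * L₁ = 1 := by
    have := congrArg Matrix.transpose hL₁X
    simpa [Matrix.transpose_mul] using this
  have hXL₂ : Xᵀ * L₂ = 0 := by
    have := congrArg Matrix.transpose hL₂X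
    simpa [Matrix.transpose_mul] using this
  have h4 : M₁ = Xᵀ := by
    have h := congrArg (fun A => Xᵀ * A) h3
    simp only [Matrix.mul_add, ← Matrix.mul_assoc, hXL₁, hXL₂, Matrix.one_mul,
      Matrix.zero_mul, add_zero, Matrix.mul_one] at h
    exact h
  have hone : X * L₁ᵀ + M₂ᵀ * L₂ᵀ = 1 := by
    have := congrArg Matrix.transpose h3
    rw [h4] at this
    simpa [Matrix.transpose_mul, Matrix.transpose_add] using this
  -- injectivity of L₂ *ᵥ
  have hinj : ∀ v, L₂ *ᵥ v = 0 → v = 0 := by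
    intro v hv
    have : M₂ *ᵥ (L₂ *ᵥ v) = 0 := by rw [hv, Matrix.mulVec_zero]
    rwa [Matrix.mulVec_mulVec, h2, Matrix.one_mulVec] at this
  set K := L₂ᵀ * H * L₂ with hKdef
  have hK : K.PosDef := posDef_conj_aux hH L₂ hinj
  have hKK : K * K⁻¹ = 1 := Matrix.mul_nonsing_inv _ (isUnit_iff_ne_zero.mpr hK.det_pos.ne')
  have hHinvH : H⁻¹ * H = 1 :=
    Matrix.nonsing_inv_mul _ (isUnit_iff_ne_zero.mpr hH.det_pos.ne')
  set G := H * L₁ - H * L₂ * K⁻¹ * (L₂ᵀ * (H * L₁)) with hGdef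
  have hL₂G : L₂ᵀ * G = 0 := by
    rw [hGdef, Matrix.mul_sub]
    have : L₂ᵀ * (H * L₂ * K⁻¹ * (L₂ᵀ * (H * L₁)))
        = (K * K⁻¹) * (L₂ᵀ * (H * L₁)) := by
      rw [hKdef]
      simp only [Matrix.mul_assoc]
    rw [this, hKK, Matrix.one_mul, sub_self]
  have hS : L₁ᵀ * H * L₁ - L₁ᵀ * H * L₂ * K⁻¹ * L₂ᵀ * H * L₁ = L₁ᵀ * G := by
    rw [hGdef, Matrix.mul_sub]
    simp only [Matrix.mul_assoc]
  rw [hS]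
  have hXS : X * (L₁ᵀ * G) = G := by
    calc X * (L₁ᵀ * G) = (X * L₁ᵀ) * G := by rw [Matrix.mul_assoc]
      _ = (X * L₁ᵀ) * G + M₂ᵀ * (L₂ᵀ * G) := by rw [hL₂G, Matrix.mul_zero, add_zero]
      _ = (X * L₁ᵀ + M₂ᵀ * L₂ᵀ) * G := by
          simp only [Matrix.add_mul, Matrix.mul_assoc]
      _ = G := by rw [hone, Matrix.one_mul]
  have hfinal : (Xᵀ * H⁻¹ * X) * (L₁ᵀ * G) = 1 := by
    calc (Xᵀ * H⁻¹ * X) * (L₁ᵀ * G) = Xᵀ * (H⁻¹ * (X * (L₁ᵀ * G))) := by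
          simp only [Matrix.mul_assoc]
      _ = Xᵀ * (H⁻¹ * G) := by rw [hXS]
      _ = Xᵀ * ((H⁻¹ * H) * L₁ - (H⁻¹ * H) * (L₂ * (K⁻¹ * (L₂ᵀ * (H * L₁))))) := by
          rw [hGdef, Matrix.mul_sub]
          simp only [Matrix.mul_assoc]
      _ = Xᵀ * L₁ - (Xᵀ * L₂) * (K⁻¹ * (L₂ᵀ * (H * L₁))) := by
          rw [hHinvH]
          simp only [Matrix.one_mul, Matrix.mul_sub, ← Matrix.mul_assoc]
      _ = 1 := by rw [hXL₁, hXL₂, Matrix.zero_mul, sub_zero]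
  exact Matrix.inv_eq_right_inv hfinal
end

section
/- Let X ∈ ℝ^{n×p} have full column rank p < n, H be symmetric positive definite, and L = [L₁, L₂] be nonsingular with L₁ᵀX = I_p and L₂ᵀX = 0. Then det(LᵀHL) = det(H)·det(LᵀL) and det(H)·det(LᵀL) = det(L₂ᵀHL₂)/det(XᵀH⁻¹X); equivalently log det(LᵀL) + log det(H) = log det(L₂ᵀHL₂) − log det(XᵀH⁻¹X). -/
open Matrix

lemma aux_posdef {n m : Type*} [Fintype n] [Fintype m] [DecidableEq n] [DecidableEq m]
    {H : Matrix n n ℝ} (hH : H.PosDef) (B : Matrix n m ℝ)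
    (hB : ∀ x : m → ℝ, x ≠ 0 → B *ᵥ x ≠ 0) : (Bᵀ * H * B).PosDef := by
  rw [posDef_iff_dotProduct_mulVec]
  constructor
  · have hBt : Bᵀ = Bᴴ := by ext i j; simp [conjTranspose]
    rw [hBt]
    exact Matrix.isHermitian_conjTranspose_mul_mul B hH.isHermitian
  · intro x hx
    have h := hH.dotProduct_mulVec_pos (hB x hx)
    have hstB : star (B *ᵥ x) = B *ᵥ x := by simp
    rw [hstB] at h
    have hst : star x = x := by simp
    rw [hst]
    calc (0:ℝ) < dotProduct (B *ᵥ x) (H *ᵥ (B *ᵥ x)) := h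
    _ = dotProduct x ((Bᵀ * H * B) *ᵥ x) := by
        rw [← Matrix.mulVec_mulVec, ← Matrix.mulVec_mulVec,
          Matrix.dotProduct_mulVec x, Matrix.vecMul_transpose,
          Matrix.dotProduct_mulVec (B *ᵥ x)]

theorem stmt_4 (n p : ℕ) (hpn : p < n) (X : Matrix (Fin n) (Fin p) ℝ)
    (hX : X.rank = p) (H : Matrix (Fin n) (Fin n) ℝ) (hH : H.PosDef)
    (L₁ : Matrix (Fin n) (Fin p) ℝ) (L₂ : Matrix (Fin n) (Fin (n - p)) ℝ)
    (M : Matrix (Fin p ⊕ Fin (n - p)) (Fin n) ℝ)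
    (hLM : Matrix.fromCols L₁ L₂ * M = 1) (hML : M * Matrix.fromCols L₁ L₂ = 1)
    (hL₁X : L₁ᵀ * X = 1) (hL₂X : L₂ᵀ * X = 0) :
    ((Matrix.fromCols L₁ L₂)ᵀ * H * Matrix.fromCols L₁ L₂).det
        = H.det * ((Matrix.fromCols L₁ L₂)ᵀ * Matrix.fromCols L₁ L₂).det ∧
    H.det * ((Matrix.fromCols L₁ L₂)ᵀ * Matrix.fromCols L₁ L₂).det
        = (L₂ᵀ * H * L₂).det / (Xᵀ * H⁻¹ * X).det ∧
    Real.log ((Matrix.fromCols L₁ L₂)ᵀ * Matrix.fromCols L₁ L₂).det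
        + Real.log H.det
        = Real.log (L₂ᵀ * H * L₂).det - Real.log (Xᵀ * H⁻¹ * X).det := by
  set L := Matrix.fromCols L₁ L₂ with hLdef
  have hdetH : H.det ≠ 0 := ne_of_gt hH.det_pos
  haveI hHinv : Invertible H := Matrix.invertibleOfIsUnitDet H (isUnit_iff_ne_zero.2 hdetH)
  have hMtLt : Mᵀ * Lᵀ = 1 := by rw [← Matrix.transpose_mul, hLM, Matrix.transpose_one]
  have hLtMt : Lᵀ * Mᵀ = 1 := by rw [← Matrix.transpose_mul, hML, Matrix.transpose_one]
  -- index equivalence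
  have hpadd : p + (n - p) = n := Nat.add_sub_cancel' hpn.le
  let e : Fin n ≃ Fin p ⊕ Fin (n - p) := (finSumFinEquiv.trans (finCongr hpadd)).symm
  -- determinants via square reindexed matrix
  set Ls : Matrix (Fin n) (Fin n) ℝ := L.submatrix id ⇑e with hLs
  have hsub : ∀ G : Matrix (Fin n) (Fin n) ℝ,
      (Lᵀ * G * L).det = Ls.det * Ls.det * G.det := by
    intro G
    have h1 : (Lᵀ * G * L).det = ((Lᵀ * G * L).submatrix ⇑e ⇑e).det :=
      (Matrix.det_submatrix_equiv_self e _).symm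
    have h2 : (Lᵀ * G * L).submatrix ⇑e ⇑e = Lsᵀ * G * Ls := by
      rw [Matrix.submatrix_mul _ _ ⇑e id ⇑e Function.bijective_id,
        Matrix.submatrix_mul _ _ ⇑e id id Function.bijective_id,
        Matrix.submatrix_id_id, hLs, Matrix.transpose_submatrix]
    rw [h1, h2, Matrix.det_mul, Matrix.det_mul, Matrix.det_transpose]
    ring
  have hsub1 : (Lᵀ * L).det = Ls.det * Ls.det := by
    have := hsub 1
    rwa [Matrix.mul_one, Matrix.det_one, mul_one] at this
  -- LᵀL invertible
  have hLtL : (Lᵀ * L) * (M * Mᵀ) = 1 := by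
    calc (Lᵀ * L) * (M * Mᵀ) = Lᵀ * (L * M) * Mᵀ := by simp only [← Matrix.mul_assoc, Matrix.mul_one, Matrix.one_mul]
    _ = 1 := by rw [hLM, Matrix.mul_one, hLtMt]
  have hdetLTL : (Lᵀ * L).det ≠ 0 := by
    intro h0
    have := Matrix.det_mul (Lᵀ * L) (M * Mᵀ)
    rw [hLtL, Matrix.det_one, h0, zero_mul] at this
    exact one_ne_zero this
  -- K := Lᵀ H L invertible with explicit inverse
  have hK1 : (M * H⁻¹ * Mᵀ) * (Lᵀ * H * L) = 1 := by
    have e1 : (M * H⁻¹ * Mᵀ) * (Lᵀ * H * L) = M * H⁻¹ * (Mᵀ * Lᵀ) * H * L := by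
      simp only [← Matrix.mul_assoc]
    rw [e1, hMtLt, Matrix.mul_one, Matrix.mul_assoc M H⁻¹ H,
      Matrix.nonsing_inv_mul H (isUnit_iff_ne_zero.2 hdetH), Matrix.mul_one, hML]
  have hK2 : (Lᵀ * H * L) * (M * H⁻¹ * Mᵀ) = 1 := by
    calc (Lᵀ * H * L) * (M * H⁻¹ * Mᵀ) = Lᵀ * H * (L * M) * H⁻¹ * Mᵀ := by simp only [← Matrix.mul_assoc, Matrix.mul_one, Matrix.one_mul]
      _ = Lᵀ * (H * H⁻¹) * Mᵀ := by rw [hLM]; simp only [← Matrix.mul_assoc, Matrix.mul_one, Matrix.one_mul]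
      _ = 1 := by rw [Matrix.mul_nonsing_inv H (isUnit_iff_ne_zero.2 hdetH), Matrix.mul_one, hLtMt]
  haveI hKinv : Invertible (Lᵀ * H * L) := ⟨M * H⁻¹ * Mᵀ, hK1, hK2⟩
  have hKinveq : (Lᵀ * H * L)⁻¹ = M * H⁻¹ * Mᵀ := Matrix.inv_eq_right_inv hK2
  -- H⁻¹ = L * K⁻¹ * Lᵀ
  have hHinveq : H⁻¹ = L * (Lᵀ * H * L)⁻¹ * Lᵀ := by
    rw [hKinveq]
    calc H⁻¹ = (L * M) * H⁻¹ * (L * M)ᵀ := by rw [hLM]; simp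
    _ = L * (M * H⁻¹ * Mᵀ) * Lᵀ := by rw [Matrix.transpose_mul]; simp only [← Matrix.mul_assoc, Matrix.mul_one, Matrix.one_mul]
  -- block decomposition
  have hKb : Lᵀ * H * L = Matrix.fromBlocks (L₁ᵀ * H * L₁) (L₁ᵀ * H * L₂)
      (L₂ᵀ * H * L₁) (L₂ᵀ * H * L₂) := by
    rw [hLdef, Matrix.transpose_fromCols, Matrix.fromRows_mul,
      Matrix.fromRows_mul_fromCols]
  -- L₂ injective
  have hL₂inj : ∀ x : Fin (n - p) → ℝ, x ≠ 0 → L₂ *ᵥ x ≠ 0 := by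
    intro x hx h0
    have h1 : M *ᵥ (L *ᵥ Sum.elim (0 : Fin p → ℝ) x) = Sum.elim (0 : Fin p → ℝ) x := by
      rw [Matrix.mulVec_mulVec, hML, Matrix.one_mulVec]
    have h2 : L *ᵥ Sum.elim (0 : Fin p → ℝ) x = 0 := by
      rw [hLdef, Matrix.fromCols_mulVec_sumElim, Matrix.mulVec_zero, zero_add, h0]
    rw [h2, Matrix.mulVec_zero] at h1
    apply hx
    funext i
    have := congrFun h1 (Sum.inr i)
    simpa using this.symm
  have hD : (L₂ᵀ * H * L₂).PosDef := aux_posdef hH L₂ hL₂inj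
  have hdetD : (L₂ᵀ * H * L₂).det ≠ 0 := ne_of_gt hD.det_pos
  haveI hDinv : Invertible (L₂ᵀ * H * L₂) :=
    Matrix.invertibleOfIsUnitDet _ (isUnit_iff_ne_zero.2 hdetD)
  haveI hKBinv : Invertible (Matrix.fromBlocks (L₁ᵀ * H * L₁) (L₁ᵀ * H * L₂)
      (L₂ᵀ * H * L₁) (L₂ᵀ * H * L₂)) := hKb ▸ hKinv
  haveI hSinv : Invertible (L₁ᵀ * H * L₁ - (L₁ᵀ * H * L₂) * ⅟(L₂ᵀ * H * L₂) * (L₂ᵀ * H * L₁)) :=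
    Matrix.invertibleOfFromBlocks₂₂Invertible _ _ _ _
  set S := L₁ᵀ * H * L₁ - (L₁ᵀ * H * L₂) * ⅟(L₂ᵀ * H * L₂) * (L₂ᵀ * H * L₁) with hSdef
  have hdetS : S.det ≠ 0 := by
    have := Matrix.isUnit_iff_isUnit_det S |>.mp (isUnit_of_invertible S)
    exact this.ne_zero
  have hdetK : (Lᵀ * H * L).det = (L₂ᵀ * H * L₂).det * S.det := by
    rw [hKb, Matrix.det_fromBlocks₂₂]
  -- Lᵀ X = fromRows 1 0
  have hLX : Lᵀ * X = Matrix.fromRows (1 : Matrix (Fin p) (Fin p) ℝ) 0 := by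
    rw [hLdef, Matrix.transpose_fromCols, Matrix.fromRows_mul, hL₁X, hL₂X]
  -- Xᵀ H⁻¹ X = ⅟S
  have hKinvblocks : (Lᵀ * H * L)⁻¹ = Matrix.fromBlocks (⅟S)
      (-(⅟S * (L₁ᵀ * H * L₂) * ⅟(L₂ᵀ * H * L₂)))
      (-(⅟(L₂ᵀ * H * L₂) * (L₂ᵀ * H * L₁) * ⅟S))
      (⅟(L₂ᵀ * H * L₂) + ⅟(L₂ᵀ * H * L₂) * (L₂ᵀ * H * L₁) * ⅟S * (L₁ᵀ * H * L₂)
        * ⅟(L₂ᵀ * H * L₂)) := by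
    rw [hKb, ← Matrix.invOf_eq_nonsing_inv, Matrix.invOf_fromBlocks₂₂_eq]
  have hE : Xᵀ * H⁻¹ * X = ⅟S := by
    have h1 : Xᵀ * H⁻¹ * X = (Lᵀ * X)ᵀ * (Lᵀ * H * L)⁻¹ * (Lᵀ * X) := by
      rw [hHinveq, Matrix.transpose_mul, Matrix.transpose_transpose]
      simp only [← Matrix.mul_assoc, Matrix.mul_one, Matrix.one_mul]
    rw [h1, hLX, hKinvblocks, Matrix.transpose_fromRows, Matrix.transpose_one,
      Matrix.transpose_zero, Matrix.fromCols_mul_fromBlocks,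
      Matrix.fromCols_mul_fromRows]
    simp
  have hdetE : (Xᵀ * H⁻¹ * X).det = (S.det)⁻¹ := by
    rw [hE, Matrix.invOf_eq_nonsing_inv, Matrix.det_nonsing_inv, Ring.inverse_eq_inv']
  have hdetEne : (Xᵀ * H⁻¹ * X).det ≠ 0 := by
    rw [hdetE]; exact inv_ne_zero hdetS
  -- claims
  have c1 : (Lᵀ * H * L).det = H.det * (Lᵀ * L).det := by
    rw [hsub H, hsub1]; ring
  have c2 : H.det * (Lᵀ * L).det = (L₂ᵀ * H * L₂).det / (Xᵀ * H⁻¹ * X).det := by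
    rw [← c1, hdetK, hdetE, div_eq_mul_inv, inv_inv]
  refine ⟨c1, c2, ?_⟩
  rw [← Real.log_mul hdetLTL hdetH, mul_comm, c2, Real.log_div hdetD hdetEne]
end

section
/- Let H(κ) be a symmetric positive definite matrix depending differentiably on a real parameter κᵢ, X a constant full column rank matrix, and P(κ) = H⁻¹ − H⁻¹X(XᵀH⁻¹X)⁻¹XᵀH⁻¹. Then ∂P/∂κᵢ = −P (∂H/∂κᵢ) P. -/
open Matrix

/-- Entrywise derivative of a (possibly rectangular) matrix-valued function. -/
def MEntryDeriv {m l : Type*} (A : ℝ → Matrix m l ℝ) (A' : Matrix m l ℝ) (κ : ℝ) : Prop :=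
  ∀ i j, HasDerivAt (fun t => A t i j) (A' i j) κ

lemma MEntryDeriv.const {m l : Type*} (C : Matrix m l ℝ) (κ : ℝ) :
    MEntryDeriv (fun _ => C) 0 κ := by
  intro i j
  simpa using hasDerivAt_const κ (C i j)

lemma MEntryDeriv.mul {m l q : Type*} [Fintype l]
    {A : ℝ → Matrix m l ℝ} {B : ℝ → Matrix l q ℝ}
    {A' : Matrix m l ℝ} {B' : Matrix l q ℝ} {κ : ℝ}
    (hA : MEntryDeriv A A' κ) (hB : MEntryDeriv B B' κ) :
    MEntryDeriv (fun t => A t * B t) (A' * B κ + A κ * B') κ := by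
  intro i j
  have h : HasDerivAt (fun t => ∑ k, A t i k * B t k j)
      (∑ k, (A' i k * B κ k j + A κ i k * B' k j)) κ :=
    HasDerivAt.fun_sum fun k _ => (hA i k).mul (hB k j)
  simpa only [Matrix.mul_apply, Matrix.add_apply, Finset.sum_add_distrib] using h

lemma MEntryDeriv.sub {m l : Type*}
    {A B : ℝ → Matrix m l ℝ} {A' B' : Matrix m l ℝ} {κ : ℝ}
    (hA : MEntryDeriv A A' κ) (hB : MEntryDeriv B B' κ) :
    MEntryDeriv (fun t => A t - B t) (A' - B') κ := by
  intro i j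
  simpa only [Matrix.sub_apply] using (hA i j).fun_sub (hB i j)

lemma MEntryDeriv.differentiable {m l : Type*}
    {A : ℝ → Matrix m l ℝ} {A' : Matrix m l ℝ} {κ : ℝ}
    (hA : MEntryDeriv A A' κ) (i : m) (j : l) :
    DifferentiableAt ℝ (fun t => A t i j) κ :=
  (hA i j).differentiableAt

lemma differentiableAt_matrix_det {k : Type*} [Fintype k] [DecidableEq k]
    {A : ℝ → Matrix k k ℝ} {κ : ℝ}
    (hA : ∀ i j, DifferentiableAt ℝ (fun t => A t i j) κ) :
    DifferentiableAt ℝ (fun t => (A t).det) κ := by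
  simp only [Matrix.det_apply']
  refine DifferentiableAt.fun_sum fun σ _ => DifferentiableAt.const_mul ?_ _
  exact (HasDerivAt.fun_finsetProd fun i _ => (hA (σ i) i).hasDerivAt).differentiableAt

lemma differentiableAt_matrix_inv_entry {k : Type*} [Fintype k] [DecidableEq k]
    {A : ℝ → Matrix k k ℝ} {κ : ℝ}
    (hdet : (A κ).det ≠ 0)
    (hA : ∀ i j, DifferentiableAt ℝ (fun t => A t i j) κ) (i j : k) :
    DifferentiableAt ℝ (fun t => (A t)⁻¹ i j) κ := by
  have hinv : ∀ t, (A t)⁻¹ i j = ((A t).det)⁻¹ * (A t).adjugate i j := by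
    intro t
    rw [Matrix.inv_def, Matrix.smul_apply, Ring.inverse_eq_inv, smul_eq_mul]
  simp only [hinv]
  have hdet' : DifferentiableAt ℝ (fun t => (A t).det) κ := differentiableAt_matrix_det hA
  have hadj : DifferentiableAt ℝ (fun t => (A t).adjugate i j) κ := by
    have hadjeq : ∀ t, (A t).adjugate i j = ((A t).updateRow j (Pi.single i 1)).det := fun t =>
      Matrix.adjugate_apply _ _ _
    simp only [hadjeq]
    refine differentiableAt_matrix_det fun a b => ?_
    rcases eq_or_ne a j with rfl | hne
    · simp only [Matrix.updateRow_self]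
      exact differentiableAt_const _
    · simp only [Matrix.updateRow_ne hne]
      exact hA a b
  exact (hdet'.inv hdet).mul hadj

lemma MEntryDeriv.inv {k : Type*} [Fintype k] [DecidableEq k]
    {A : ℝ → Matrix k k ℝ} {A' : Matrix k k ℝ} {κ : ℝ}
    (hdet : ∀ t, IsUnit (A t).det)
    (hA : MEntryDeriv A A' κ) :
    MEntryDeriv (fun t => (A t)⁻¹) (-((A κ)⁻¹ * A' * (A κ)⁻¹)) κ := by
  classical
  have hdiff : ∀ i j, DifferentiableAt ℝ (fun t => (A t)⁻¹ i j) κ := fun i j =>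
    differentiableAt_matrix_inv_entry (hdet κ).ne_zero hA.differentiable i j
  set B' : Matrix k k ℝ := Matrix.of fun i j => deriv (fun t => (A t)⁻¹ i j) κ with hB'def
  have hB : MEntryDeriv (fun t => (A t)⁻¹) B' κ := fun i j => (hdiff i j).hasDerivAt
  have hmul := hA.mul hB
  have hone : MEntryDeriv (fun t => A t * (A t)⁻¹) (0 : Matrix k k ℝ) κ := by
    have heq : (fun t => A t * (A t)⁻¹) = fun _ => (1 : Matrix k k ℝ) := by
      funext t; exact Matrix.mul_nonsing_inv _ (hdet t)
    rw [heq]; exact MEntryDeriv.const _ _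
  have hzero : A' * (A κ)⁻¹ + A κ * B' = 0 := by
    ext i j
    exact ((hmul i j).unique (hone i j))
  have h1 : A κ * B' = -(A' * (A κ)⁻¹) := eq_neg_of_add_eq_zero_right hzero
  have hBval : B' = -((A κ)⁻¹ * A' * (A κ)⁻¹) := by
    calc B' = (A κ)⁻¹ * (A κ * B') := (Matrix.nonsing_inv_mul_cancel_left _ _ (hdet κ)).symm
      _ = (A κ)⁻¹ * -(A' * (A κ)⁻¹) := by rw [h1]
      _ = -((A κ)⁻¹ * A' * (A κ)⁻¹) := by rw [Matrix.mul_neg, Matrix.mul_assoc]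
  exact hBval ▸ hB

theorem stmt_8 (n p : ℕ) (X : Matrix (Fin n) (Fin p) ℝ) (hX : X.rank = p)
    (H : ℝ → Matrix (Fin n) (Fin n) ℝ) (H' : Matrix (Fin n) (Fin n) ℝ) (κ : ℝ)
    (hH : ∀ t, (H t).PosDef)
    (hderiv : ∀ i j, HasDerivAt (fun t => H t i j) (H' i j) κ)
    (P : ℝ → Matrix (Fin n) (Fin n) ℝ)
    (hP : ∀ t, P t = (H t)⁻¹ - (H t)⁻¹ * X * (Xᵀ * (H t)⁻¹ * X)⁻¹ * Xᵀ * (H t)⁻¹) :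
    ∀ i j, HasDerivAt (fun t => P t i j) ((-(P κ * H' * P κ)) i j) κ := by
  classical
  have hdetH : ∀ t, IsUnit (H t).det := fun t => (isUnit_iff_ne_zero).mpr (hH t).det_pos.ne'
  -- X has injective mulVecLin
  have hXinj : Function.Injective X.mulVecLin := by
    rw [← LinearMap.ker_eq_bot]
    have h2 : Module.finrank ℝ (LinearMap.range X.mulVecLin) = p := hX
    have h1 := LinearMap.finrank_range_add_finrank_ker X.mulVecLin
    rw [h2, Module.finrank_fin_fun] at h1
    have h0 : Module.finrank ℝ (LinearMap.ker X.mulVecLin) = 0 := by omega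
    exact Submodule.finrank_eq_zero.mp h0
  -- the inner matrix is positive definite, hence invertible
  have hSpos : ∀ t, (Xᵀ * (H t)⁻¹ * X).PosDef := by
    intro t
    have hKpos := (hH t).inv
    refine Matrix.PosDef.of_dotProduct_mulVec_pos ?_ ?_
    · have := Matrix.isHermitian_conjTranspose_mul_mul X hKpos.isHermitian
      rwa [Matrix.conjTranspose_eq_transpose_of_trivial] at this
    · intro x hx
      have hXx : X *ᵥ x ≠ 0 := by
        intro h
        apply hx
        apply hXinj
        simp only [Matrix.mulVecLin_apply, h, map_zero]
      have hpos := hKpos.dotProduct_mulVec_pos hXx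
      have hrw : star x ⬝ᵥ ((Xᵀ * (H t)⁻¹ * X) *ᵥ x)
          = star (X *ᵥ x) ⬝ᵥ ((H t)⁻¹ *ᵥ (X *ᵥ x)) := by
        rw [star_trivial, star_trivial, ← Matrix.mulVec_mulVec, ← Matrix.mulVec_mulVec,
          Matrix.dotProduct_mulVec, Matrix.vecMul_transpose]
      rw [hrw]
      exact hpos
  have hSdet : ∀ t, IsUnit (Xᵀ * (H t)⁻¹ * X).det := fun t =>
    (isUnit_iff_ne_zero).mpr (hSpos t).det_pos.ne'
  -- derivative chain
  have hK : MEntryDeriv (fun t => (H t)⁻¹) (-((H κ)⁻¹ * H' * (H κ)⁻¹)) κ :=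
    MEntryDeriv.inv hdetH hderiv
  set K' : Matrix (Fin n) (Fin n) ℝ := -((H κ)⁻¹ * H' * (H κ)⁻¹) with hK'def
  have hXc := MEntryDeriv.const X κ
  have hXtc := MEntryDeriv.const Xᵀ κ
  have hS : MEntryDeriv (fun t => Xᵀ * (H t)⁻¹ * X) (Xᵀ * K' * X) κ := by
    have h := (hXtc.mul hK).mul hXc
    simpa only [Matrix.zero_mul, Matrix.mul_zero, zero_add, add_zero] using h
  have hT : MEntryDeriv (fun t => (Xᵀ * (H t)⁻¹ * X)⁻¹)
      (-((Xᵀ * (H κ)⁻¹ * X)⁻¹ * (Xᵀ * K' * X) * (Xᵀ * (H κ)⁻¹ * X)⁻¹)) κ :=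
    MEntryDeriv.inv hSdet hS
  have hKX : MEntryDeriv (fun t => (H t)⁻¹ * X) (K' * X) κ := by
    simpa only [Matrix.mul_zero, add_zero] using hK.mul hXc
  have hKXT := hKX.mul hT
  have h4 : MEntryDeriv (fun t => (H t)⁻¹ * X * (Xᵀ * (H t)⁻¹ * X)⁻¹ * Xᵀ)
      ((K' * X * (Xᵀ * (H κ)⁻¹ * X)⁻¹ +
        (H κ)⁻¹ * X * -((Xᵀ * (H κ)⁻¹ * X)⁻¹ * (Xᵀ * K' * X) * (Xᵀ * (H κ)⁻¹ * X)⁻¹)) * Xᵀ) κ := by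
    simpa only [Matrix.mul_zero, add_zero] using hKXT.mul hXtc
  have h5 := h4.mul hK
  have h6 := hK.sub h5
  intro i j
  simp only [hP]
  have hfin : -(((H κ)⁻¹ - (H κ)⁻¹ * X * (Xᵀ * (H κ)⁻¹ * X)⁻¹ * Xᵀ * (H κ)⁻¹) * H' *
      ((H κ)⁻¹ - (H κ)⁻¹ * X * (Xᵀ * (H κ)⁻¹ * X)⁻¹ * Xᵀ * (H κ)⁻¹)) =
      K' - ((K' * X * (Xᵀ * (H κ)⁻¹ * X)⁻¹ +
        (H κ)⁻¹ * X * -((Xᵀ * (H κ)⁻¹ * X)⁻¹ * (Xᵀ * K' * X) * (Xᵀ * (H κ)⁻¹ * X)⁻¹)) * Xᵀ *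
          (H κ)⁻¹ + (H κ)⁻¹ * X * (Xᵀ * (H κ)⁻¹ * X)⁻¹ * Xᵀ * K') := by
    rw [hK'def]
    simp only [Matrix.sub_mul, Matrix.mul_sub, Matrix.add_mul, Matrix.mul_add, Matrix.neg_mul,
      Matrix.mul_neg, neg_neg, neg_sub, sub_eq_add_neg, neg_add, Matrix.mul_assoc]
    abel
  rw [hfin]
  exact h6 i j
end

section
/- Let R ∈ ℝ^{n×n} and G ∈ ℝ^{b×b} be symmetric positive definite, X ∈ ℝ^{n×p} of full column rank, Z ∈ ℝ^{n×b}. Define C = [[XᵀR⁻¹X, XᵀR⁻¹Z],[ZᵀR⁻¹X, ZᵀR⁻¹Z + G⁻¹]] and H = R + ZGZᵀ. Then the top-left p×p block of C⁻¹ equals (XᵀH⁻¹X)⁻¹. -/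
open Matrix

/-- Conjugation of a positive definite matrix by an injective matrix is positive definite. -/
lemma aux_posDef_conj {n p : ℕ} {M : Matrix (Fin n) (Fin n) ℝ} (hM : M.PosDef)
    (X : Matrix (Fin n) (Fin p) ℝ) (hX : Function.Injective X.mulVec) :
    (Xᵀ * M * X).PosDef := by
  have hXc : Xᴴ = Xᵀ := Matrix.conjTranspose_eq_transpose_of_trivial X
  refine Matrix.PosDef.of_dotProduct_mulVec_pos ?_ ?_
  · have := Matrix.isHermitian_conjTranspose_mul_mul X hM.isHermitian
    rwa [hXc] at this
  · intro x hx
    have hXx : X *ᵥ x ≠ 0 := by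
      intro h
      apply hx
      apply hX
      simpa using h
    have := hM.dotProduct_mulVec_pos hXx
    simpa only [star_mulVec, dotProduct_mulVec, vecMul_vecMul, hXc] using this

lemma aux_inj_of_rank {n p : ℕ} (X : Matrix (Fin n) (Fin p) ℝ) (hX : X.rank = p) :
    Function.Injective X.mulVec := by
  have h : LinearMap.ker X.mulVecLin = ⊥ := by
    have hrn := LinearMap.finrank_range_add_finrank_ker X.mulVecLin
    rw [show Module.finrank ℝ (LinearMap.range X.mulVecLin) = p from hX] at hrn
    simp [Module.finrank_fintype_fun_eq_card] at hrn
    exact hrn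
  have := LinearMap.ker_eq_bot.mp h
  intro x y hxy
  exact this hxy

theorem stmt_15 (n p b : ℕ) (R : Matrix (Fin n) (Fin n) ℝ) (hR : R.PosDef)
    (G : Matrix (Fin b) (Fin b) ℝ) (hG : G.PosDef)
    (X : Matrix (Fin n) (Fin p) ℝ) (hX : X.rank = p)
    (Z : Matrix (Fin n) (Fin b) ℝ) :
    ((Matrix.fromBlocks (Xᵀ * R⁻¹ * X) (Xᵀ * R⁻¹ * Z)
        (Zᵀ * R⁻¹ * X) (Zᵀ * R⁻¹ * Z + G⁻¹))⁻¹).toBlocks₁₁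
      = (Xᵀ * (R + Z * G * Zᵀ)⁻¹ * X)⁻¹ := by
  have hZc : Zᴴ = Zᵀ := Matrix.conjTranspose_eq_transpose_of_trivial Z
  have hRinv : (R⁻¹).PosDef := hR.inv
  have hGinv : (G⁻¹).PosDef := hG.inv
  -- D is positive definite
  set D : Matrix (Fin b) (Fin b) ℝ := Zᵀ * R⁻¹ * Z + G⁻¹ with hD_def
  have hZRZ : (Zᵀ * R⁻¹ * Z).PosSemidef := by
    have := hRinv.posSemidef.conjTranspose_mul_mul_same Z
    rwa [hZc] at this
  have hD : D.PosDef := Matrix.PosDef.posSemidef_add hZRZ hGinv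
  -- H is positive definite
  have hZGZ : (Z * G * Zᵀ).PosSemidef := by
    have := hG.posSemidef.mul_mul_conjTranspose_same Z
    rwa [hZc] at this
  have hH : (R + Z * G * Zᵀ).PosDef := hR.add_posSemidef hZGZ
  have hHinv : ((R + Z * G * Zᵀ)⁻¹).PosDef := hH.inv
  -- basic inverse identities
  have hRR : R * R⁻¹ = 1 := Matrix.mul_nonsing_inv R (isUnit_iff_ne_zero.mpr hR.det_pos.ne')
  have hGG : G * G⁻¹ = 1 := Matrix.mul_nonsing_inv G (isUnit_iff_ne_zero.mpr hG.det_pos.ne')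
  have hDD : D * D⁻¹ = 1 := Matrix.mul_nonsing_inv D (isUnit_iff_ne_zero.mpr hD.det_pos.ne')
  -- key cancellation
  have hZRZ_eq : Zᵀ * R⁻¹ * Z = D - G⁻¹ := by rw [hD_def, add_sub_cancel_right]
  have key : Z * G * Zᵀ * R⁻¹ * Z * D⁻¹ = Z * G - Z * D⁻¹ := by
    have h1 : Z * G * Zᵀ * R⁻¹ * Z = Z * G * (D - G⁻¹) := by
      rw [← hZRZ_eq]; simp only [Matrix.mul_assoc]
    rw [h1, Matrix.mul_sub, Matrix.sub_mul,
      Matrix.mul_assoc (Z * G) D D⁻¹, hDD, Matrix.mul_one,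
      Matrix.mul_assoc Z G G⁻¹, hGG, Matrix.mul_one]
  -- Woodbury identity
  have woodbury : (R + Z * G * Zᵀ)⁻¹ = R⁻¹ - R⁻¹ * Z * D⁻¹ * Zᵀ * R⁻¹ := by
    apply Matrix.inv_eq_right_inv
    simp only [Matrix.add_mul, Matrix.mul_sub, ← Matrix.mul_assoc]
    rw [hRR, Matrix.one_mul, key, Matrix.sub_mul, Matrix.sub_mul]
    abel
  -- the Schur complement equals Xᵀ H⁻¹ X
  have hS : Xᵀ * (R + Z * G * Zᵀ)⁻¹ * X
      = Xᵀ * R⁻¹ * X - Xᵀ * R⁻¹ * Z * D⁻¹ * (Zᵀ * R⁻¹ * X) := by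
    rw [woodbury]
    simp only [Matrix.mul_sub, Matrix.sub_mul, Matrix.mul_assoc]
  -- invertibility instances
  haveI iD : Invertible D := hD.isUnit.invertible
  haveI iS0 : Invertible (Xᵀ * (R + Z * G * Zᵀ)⁻¹ * X) :=
    (aux_posDef_conj hHinv X (aux_inj_of_rank X hX)).isUnit.invertible
  have hinvD : (⅟D : Matrix (Fin b) (Fin b) ℝ) = D⁻¹ := invOf_eq_nonsing_inv D
  haveI iS : Invertible (Xᵀ * R⁻¹ * X - Xᵀ * R⁻¹ * Z * ⅟D * (Zᵀ * R⁻¹ * X)) := by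
    rw [hinvD, ← hS]; exact iS0
  haveI iC : Invertible (Matrix.fromBlocks (Xᵀ * R⁻¹ * X) (Xᵀ * R⁻¹ * Z)
      (Zᵀ * R⁻¹ * X) D) := Matrix.fromBlocks₂₂Invertible _ _ _ _
  rw [← invOf_eq_nonsing_inv, Matrix.invOf_fromBlocks₂₂_eq, Matrix.toBlocks_fromBlocks₁₁,
    invOf_eq_nonsing_inv, hinvD, ← hS]
end

section
/- Let R ∈ ℝ^{n×n} and G ∈ ℝ^{b×b} be symmetric positive definite, X ∈ ℝ^{n×p} of full column rank, Z ∈ ℝ^{n×b}, H = R + ZGZᵀ, W = [X, Z], and C = WᵀR⁻¹W + diag(0, G⁻¹) (i.e., C = [[XᵀR⁻¹X, XᵀR⁻¹Z],[ZᵀR⁻¹X, ZᵀR⁻¹Z + G⁻¹]]). Then H⁻¹ − H⁻¹X(XᵀH⁻¹X)⁻¹XᵀH⁻¹ = R⁻¹ − R⁻¹WC⁻¹WᵀR⁻¹. -/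
open Matrix

theorem stmt_16 (n p b : ℕ) (R : Matrix (Fin n) (Fin n) ℝ) (hR : R.PosDef)
    (G : Matrix (Fin b) (Fin b) ℝ) (hG : G.PosDef)
    (X : Matrix (Fin n) (Fin p) ℝ) (hX : X.rank = p)
    (Z : Matrix (Fin n) (Fin b) ℝ)
    (H : Matrix (Fin n) (Fin n) ℝ) (hH : H = R + Z * G * Zᵀ)
    (W : Matrix (Fin n) (Fin p ⊕ Fin b) ℝ) (hW : W = Matrix.fromCols X Z)
    (C : Matrix (Fin p ⊕ Fin b) (Fin p ⊕ Fin b) ℝ)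
    (hC : C = Matrix.fromBlocks (Xᵀ * R⁻¹ * X) (Xᵀ * R⁻¹ * Z)
        (Zᵀ * R⁻¹ * X) (Zᵀ * R⁻¹ * Z + G⁻¹)) :
    H⁻¹ - H⁻¹ * X * (Xᵀ * H⁻¹ * X)⁻¹ * Xᵀ * H⁻¹
      = R⁻¹ - R⁻¹ * W * C⁻¹ * Wᵀ * R⁻¹ := by
  have hRu : IsUnit R := hR.isUnit
  have hGu : IsUnit G := hG.isUnit
  have hRi : R⁻¹.PosDef := hR.inv
  -- the matrix K = Zᵀ R⁻¹ Z + G⁻¹ is positive definite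
  have hZRZ : (Zᵀ * R⁻¹ * Z).PosSemidef := by
    have := hRi.posSemidef.conjTranspose_mul_mul_same Z
    simpa [conjTranspose_eq_transpose_of_trivial] using this
  have hKpd : (Zᵀ * R⁻¹ * Z + G⁻¹).PosDef := Matrix.PosDef.posSemidef_add hZRZ hG.inv
  have hKu : IsUnit (Zᵀ * R⁻¹ * Z + G⁻¹) := hKpd.isUnit
  -- H is positive definite
  have hHpd : H.PosDef := by
    rw [hH]
    refine hR.add_posSemidef ?_
    have := hG.posSemidef.mul_mul_conjTranspose_same Z
    simpa [conjTranspose_eq_transpose_of_trivial] using this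
  -- Woodbury identity for H⁻¹
  have hHinv : H⁻¹ = R⁻¹ - R⁻¹ * Z * (Zᵀ * R⁻¹ * Z + G⁻¹)⁻¹ * Zᵀ * R⁻¹ := by
    rw [hH]
    have := add_mul_mul_inv_eq_sub R Z G Zᵀ hRu hGu (by rwa [add_comm] at hKu)
    rwa [add_comm G⁻¹ (Zᵀ * R⁻¹ * Z)] at this
  -- X has injective mulVec
  have hinj : Function.Injective X.mulVec := by
    have h2 := LinearMap.finrank_range_add_finrank_ker X.mulVecLin
    have h3 : Module.finrank ℝ (LinearMap.range X.mulVecLin) = p := hX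
    rw [h3, Module.finrank_fin_fun] at h2
    have h4 : Module.finrank ℝ (LinearMap.ker X.mulVecLin) = 0 := by omega
    have h5 : LinearMap.ker X.mulVecLin = ⊥ := Submodule.finrank_eq_zero.mp h4
    have := LinearMap.ker_eq_bot.mp h5
    simpa [Function.Injective] using this
  -- S := Xᵀ H⁻¹ X is positive definite
  have hHi : H⁻¹.PosDef := hHpd.inv
  have hSpd : (Xᵀ * H⁻¹ * X).PosDef := by
    refine posDef_iff_dotProduct_mulVec.mpr ⟨?_, ?_⟩
    · have := isHermitian_conjTranspose_mul_mul X hHi.1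
      simpa [conjTranspose_eq_transpose_of_trivial] using this
    · intro x hx
      have hXx : X *ᵥ x ≠ 0 := fun h => hx (hinj (by simpa using h))
      have := hHi.dotProduct_mulVec_pos hXx
      simpa [← mulVec_mulVec, dotProduct_mulVec, vecMul_transpose] using this
  set S := Xᵀ * H⁻¹ * X with hSdef
  -- S is the Schur complement of the (2,2) block of C
  have hSchur : Xᵀ * R⁻¹ * X - Xᵀ * R⁻¹ * Z * (Zᵀ * R⁻¹ * Z + G⁻¹)⁻¹ * (Zᵀ * R⁻¹ * X) = S := by
    rw [hSdef, hHinv]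
    simp only [Matrix.mul_sub, Matrix.sub_mul, Matrix.mul_assoc]
  -- compute C⁻¹ via block inversion
  haveI iK : Invertible (Zᵀ * R⁻¹ * Z + G⁻¹) := hKu.invertible
  have hiK : ⅟(Zᵀ * R⁻¹ * Z + G⁻¹) = (Zᵀ * R⁻¹ * Z + G⁻¹)⁻¹ := invOf_eq_nonsing_inv _
  haveI iS : Invertible (Xᵀ * R⁻¹ * X - Xᵀ * R⁻¹ * Z * ⅟(Zᵀ * R⁻¹ * Z + G⁻¹) * (Zᵀ * R⁻¹ * X)) := by
    rw [hiK, hSchur]; exact hSpd.isUnit.invertible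
  have hCinv : C⁻¹ = Matrix.fromBlocks S⁻¹
      (-(S⁻¹ * (Xᵀ * R⁻¹ * Z) * (Zᵀ * R⁻¹ * Z + G⁻¹)⁻¹))
      (-((Zᵀ * R⁻¹ * Z + G⁻¹)⁻¹ * (Zᵀ * R⁻¹ * X) * S⁻¹))
      ((Zᵀ * R⁻¹ * Z + G⁻¹)⁻¹ + (Zᵀ * R⁻¹ * Z + G⁻¹)⁻¹ * (Zᵀ * R⁻¹ * X) * S⁻¹ *
        (Xᵀ * R⁻¹ * Z) * (Zᵀ * R⁻¹ * Z + G⁻¹)⁻¹) := by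
    rw [hC]
    haveI iC := fromBlocks₂₂Invertible (Xᵀ * R⁻¹ * X) (Xᵀ * R⁻¹ * Z) (Zᵀ * R⁻¹ * X)
      (Zᵀ * R⁻¹ * Z + G⁻¹)
    rw [← invOf_eq_nonsing_inv, invOf_fromBlocks₂₂_eq]
    simp only [invOf_eq_nonsing_inv, hSchur]
  -- now pure algebra
  rw [hW, hCinv, transpose_fromCols]
  simp only [Matrix.mul_fromCols, Matrix.fromCols_mul_fromBlocks,
    Matrix.fromCols_mul_fromRows]
  rw [hHinv]
  simp only [Matrix.mul_sub, Matrix.sub_mul, Matrix.mul_add, Matrix.add_mul,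
    Matrix.mul_neg, Matrix.neg_mul, Matrix.mul_assoc]
  abel
end

section
/- Let R, G be symmetric positive definite, X of full column rank, Z arbitrary, H = R + ZGZᵀ, P = H⁻¹ − H⁻¹X(XᵀH⁻¹X)⁻¹XᵀH⁻¹, and let (τ̂, ũ) solve the mixed model equations C(τ̂; ũ) = (XᵀR⁻¹y; ZᵀR⁻¹y) where C = [[XᵀR⁻¹X, XᵀR⁻¹Z],[ZᵀR⁻¹X, ZᵀR⁻¹Z + G⁻¹]]. Then Py = R⁻¹(y − Xτ̂ − Zũ). -/
open Matrix

theorem stmt_17 (n p b : ℕ) (R : Matrix (Fin n) (Fin n) ℝ) (hR : R.PosDef)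
    (G : Matrix (Fin b) (Fin b) ℝ) (hG : G.PosDef)
    (X : Matrix (Fin n) (Fin p) ℝ) (hX : X.rank = p)
    (Z : Matrix (Fin n) (Fin b) ℝ)
    (H : Matrix (Fin n) (Fin n) ℝ) (hH : H = R + Z * G * Zᵀ)
    (P : Matrix (Fin n) (Fin n) ℝ)
    (hP : P = H⁻¹ - H⁻¹ * X * (Xᵀ * H⁻¹ * X)⁻¹ * Xᵀ * H⁻¹)
    (C : Matrix (Fin p ⊕ Fin b) (Fin p ⊕ Fin b) ℝ)
    (hC : C = Matrix.fromBlocks (Xᵀ * R⁻¹ * X) (Xᵀ * R⁻¹ * Z)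
        (Zᵀ * R⁻¹ * X) (Zᵀ * R⁻¹ * Z + G⁻¹))
    (y : Fin n → ℝ) (τ : Fin p → ℝ) (u : Fin b → ℝ)
    (hsol : C *ᵥ Sum.elim τ u
      = Sum.elim ((Xᵀ * R⁻¹) *ᵥ y) ((Zᵀ * R⁻¹) *ᵥ y)) :
    P *ᵥ y = R⁻¹ *ᵥ (y - X *ᵥ τ - Z *ᵥ u) := by
  classical
  -- injectivity of X as a linear map
  have hXinj : ∀ x : Fin p → ℝ, x ≠ 0 → X *ᵥ x ≠ 0 := by
    have hker : LinearMap.ker X.mulVecLin = ⊥ := by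
      have hrn := X.mulVecLin.finrank_range_add_finrank_ker
      rw [show Module.finrank ℝ (LinearMap.range X.mulVecLin) = p from hX,
        Module.finrank_fin_fun] at hrn
      have h0 : Module.finrank ℝ (LinearMap.ker X.mulVecLin) = 0 := by omega
      exact Submodule.finrank_eq_zero.mp h0
    intro x hx hXx
    exact hx (LinearMap.ker_eq_bot.mp hker (by simpa using hXx))
  -- H is positive definite
  have hZGZ : (Z * G * Zᵀ).PosSemidef := by
    have := hG.posSemidef.mul_mul_conjTranspose_same Z
    simpa [conjTranspose_eq_transpose_of_trivial] using this
  have hHpd : H.PosDef := hH ▸ hR.add_posSemidef hZGZ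
  have hHinv : H⁻¹.PosDef := hHpd.inv
  -- XᵀH⁻¹X is positive definite
  have hM : (Xᵀ * H⁻¹ * X).PosDef := by
    rw [posDef_iff_dotProduct_mulVec]; constructor
    · have := isHermitian_conjTranspose_mul_mul X hHinv.isHermitian
      simpa [conjTranspose_eq_transpose_of_trivial] using this
    · intro x hx
      have h1 := hHinv.dotProduct_mulVec_pos (x := X *ᵥ x) (hXinj x hx)
      have h2 : star x ⬝ᵥ ((Xᵀ * H⁻¹ * X) *ᵥ x)
          = star (X *ᵥ x) ⬝ᵥ (H⁻¹ *ᵥ (X *ᵥ x)) := by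
        simp only [star_trivial, ← mulVec_mulVec, dotProduct_mulVec (v := x),
          vecMul_transpose]
      rw [h2]; exact h1
  -- invertibility facts
  have hGunit : IsUnit G.det := (Matrix.isUnit_iff_isUnit_det _).mp hG.isUnit
  have hRunit : IsUnit R.det := (Matrix.isUnit_iff_isUnit_det _).mp hR.isUnit
  have hMunit : IsUnit (Xᵀ * H⁻¹ * X).det := (Matrix.isUnit_iff_isUnit_det _).mp hM.isUnit
  have hHunit : IsUnit H.det := (Matrix.isUnit_iff_isUnit_det _).mp hHpd.isUnit
  -- extract the two block equations
  rw [hC, fromBlocks_mulVec] at hsol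
  have heq1 : (Xᵀ * R⁻¹ * X) *ᵥ τ + (Xᵀ * R⁻¹ * Z) *ᵥ u = (Xᵀ * R⁻¹) *ᵥ y := by
    funext i; simpa using congrFun hsol (Sum.inl i)
  have heq2 : (Zᵀ * R⁻¹ * X) *ᵥ τ + (Zᵀ * R⁻¹ * Z + G⁻¹) *ᵥ u = (Zᵀ * R⁻¹) *ᵥ y := by
    funext i; simpa using congrFun hsol (Sum.inr i)
  set e : Fin n → ℝ := y - X *ᵥ τ - Z *ᵥ u with he
  -- Xᵀ R⁻¹ e = 0
  have hXe : Xᵀ *ᵥ (R⁻¹ *ᵥ e) = 0 := by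
    have h3 : Xᵀ *ᵥ (R⁻¹ *ᵥ e)
        = (Xᵀ * R⁻¹) *ᵥ y - ((Xᵀ * R⁻¹ * X) *ᵥ τ + (Xᵀ * R⁻¹ * Z) *ᵥ u) := by
      simp only [he, mulVec_sub, mulVec_add, ← mulVec_mulVec, sub_sub]
    rw [h3, heq1, sub_self]
  -- Zᵀ R⁻¹ e = G⁻¹ u
  have hZe : Zᵀ *ᵥ (R⁻¹ *ᵥ e) = G⁻¹ *ᵥ u := by
    have h3 : Zᵀ *ᵥ (R⁻¹ *ᵥ e)
        = (Zᵀ * R⁻¹) *ᵥ y - ((Zᵀ * R⁻¹ * X) *ᵥ τ + (Zᵀ * R⁻¹ * Z) *ᵥ u) := by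
      simp only [he, mulVec_sub, mulVec_add, ← mulVec_mulVec, sub_sub]
    rw [h3, ← heq2]
    simp only [add_mulVec, ← mulVec_mulVec]
    abel
  -- u recovered from the residual
  have hu : Z *ᵥ u = Z *ᵥ (G *ᵥ (Zᵀ *ᵥ (R⁻¹ *ᵥ e))) := by
    rw [hZe, mulVec_mulVec, mulVec_mulVec, Matrix.mul_assoc,
      Matrix.mul_nonsing_inv G hGunit, Matrix.mul_one]
  -- H R⁻¹ e = y - X τ
  have hHe : H *ᵥ (R⁻¹ *ᵥ e) = y - X *ᵥ τ := by
    rw [hH, add_mulVec, mulVec_mulVec e R R⁻¹, mul_nonsing_inv R hRunit, one_mulVec]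
    have h4 : (Z * G * Zᵀ) *ᵥ (R⁻¹ *ᵥ e) = Z *ᵥ (G *ᵥ (Zᵀ *ᵥ (R⁻¹ *ᵥ e))) := by
      simp only [← mulVec_mulVec]
    rw [h4, ← hu, he]
    abel
  -- R⁻¹ e = H⁻¹ (y - X τ)
  have hRe : R⁻¹ *ᵥ e = H⁻¹ *ᵥ (y - X *ᵥ τ) := by
    rw [← hHe, mulVec_mulVec, nonsing_inv_mul H hHunit, one_mulVec]
  -- (Xᵀ H⁻¹ X) τ = Xᵀ H⁻¹ y
  have hτ : (Xᵀ * H⁻¹ * X) *ᵥ τ = (Xᵀ * H⁻¹) *ᵥ y := by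
    have h5 : Xᵀ *ᵥ (H⁻¹ *ᵥ (y - X *ᵥ τ)) = 0 := by rw [← hRe]; exact hXe
    have h6 : (Xᵀ * H⁻¹) *ᵥ y - (Xᵀ * H⁻¹ * X) *ᵥ τ = 0 := by
      rw [← h5]
      simp only [mulVec_sub, ← mulVec_mulVec]
    have := sub_eq_zero.mp h6
    exact this.symm
  -- τ recovered
  have hτ2 : (Xᵀ * H⁻¹ * X)⁻¹ *ᵥ ((Xᵀ * H⁻¹) *ᵥ y) = τ := by
    rw [← hτ, mulVec_mulVec, nonsing_inv_mul _ hMunit, one_mulVec]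
  -- conclude
  rw [hP, Matrix.sub_mulVec]
  have h7 : (H⁻¹ * X * (Xᵀ * H⁻¹ * X)⁻¹ * Xᵀ * H⁻¹) *ᵥ y
      = (H⁻¹ * X) *ᵥ ((Xᵀ * H⁻¹ * X)⁻¹ *ᵥ ((Xᵀ * H⁻¹) *ᵥ y)) := by
    simp only [← mulVec_mulVec]
  rw [h7, hτ2, hRe]
  simp only [mulVec_sub, ← mulVec_mulVec]
end
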